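/- For every n ≥ 2 there exist a dataset D of n pairs of reals with all first coordinates distinct and all second coordinates distinct having no discordant pairs (d_D = 0), and a neighboring dataset D' = D ∪ {(x_0,y_0)} (still with all first coordinates distinct and all second coordinates distinct) in which the added point is discordant with every point of D (d_{D'} = n), and for any such pair τ̂(D) − τ̂(D') = 3/2. -/

import Mathlib

/-- The number of discordant pairs of a dataset `{(X i, Y i)}`. -/
noncomputable def discord {m : ℕ} (X Y : Fin m → ℝ) : ℕ :=
  (Finset.univ.filter (fun p : Fin m × Fin m =>
    p.1 < p.2 ∧ (X p.1 - X p.2) * (Y p.1 - Y p.2) < 0)).card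

/-- The empirical Kendall rank correlation `τ̂ = m/2 - 2 d / (m - 1)`. -/
noncomputable def tauHat {m : ℕ} (X Y : Fin m → ℝ) : ℝ :=
  (m : ℝ) / 2 - 2 * (discord X Y : ℝ) / ((m : ℝ) - 1)

lemma discord_diag (n : ℕ) : discord (fun j : Fin n => (j : ℝ)) (fun j : Fin n => (j : ℝ)) = 0 := by
  unfold discord
  rw [Finset.card_eq_zero, Finset.filter_eq_empty_iff]
  rintro p -
  rintro ⟨-, hlt⟩
  exact absurd hlt (not_lt.2 (mul_self_nonneg _))

lemma discord_snoc_eq {n : ℕ} (X Y : Fin n → ℝ) (x₀ y₀ : ℝ)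
    (h0 : discord X Y = 0) (hd : ∀ j : Fin n, (X j - x₀) * (Y j - y₀) < 0) :
    discord (Fin.snoc X x₀ : Fin (n + 1) → ℝ) (Fin.snoc Y y₀) = n := by
  unfold discord at h0 ⊢
  rw [Finset.card_eq_zero, Finset.filter_eq_empty_iff] at h0
  have hset : (Finset.univ.filter (fun p : Fin (n+1) × Fin (n+1) =>
      p.1 < p.2 ∧ ((Fin.snoc X x₀ : Fin (n+1) → ℝ) p.1 - (Fin.snoc X x₀ : Fin (n+1) → ℝ) p.2)
        * ((Fin.snoc Y y₀ : Fin (n+1) → ℝ) p.1 - (Fin.snoc Y y₀ : Fin (n+1) → ℝ) p.2) < 0))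
      = Finset.univ.image (fun j : Fin n => ((j.castSucc, Fin.last n) : Fin (n+1) × Fin (n+1))) := by
    ext p
    simp only [Finset.mem_filter, Finset.mem_univ, true_and, Finset.mem_image]
    constructor
    · rintro ⟨hlt, hneg⟩
      rcases Fin.eq_castSucc_or_eq_last p.2 with ⟨j2, h2⟩ | h2
      · rcases Fin.eq_castSucc_or_eq_last p.1 with ⟨j1, h1⟩ | h1
        · exfalso
          rw [h1, h2] at hneg
          simp only [Fin.snoc_castSucc] at hneg
          rw [h1, h2, Fin.castSucc_lt_castSucc_iff] at hlt
          exact h0 (Finset.mem_univ (j1, j2)) ⟨hlt, hneg⟩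
        · exfalso
          rw [h1, h2] at hlt
          exact absurd hlt (not_lt.2 (Fin.le_last _))
      · rcases Fin.eq_castSucc_or_eq_last p.1 with ⟨j1, h1⟩ | h1
        · exact ⟨j1, by rw [Prod.ext_iff]; exact ⟨h1.symm, h2.symm⟩⟩
        · exfalso
          rw [h1, h2] at hlt
          exact lt_irrefl _ hlt
    · rintro ⟨j, hj⟩
      rw [← hj]
      refine ⟨Fin.castSucc_lt_last j, ?_⟩
      simp only [Fin.snoc_castSucc, Fin.snoc_last]
      exact hd j
  rw [hset, Finset.card_image_of_injective _ (fun a b h => by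
    simpa [Prod.ext_iff, Fin.castSucc_inj] using h)]
  simp

/-- The sensitivity bound `3/2` for Kendall rank correlation is attained: there is a tie-free
dataset `D` with no discordant pairs and a tie-free neighbor `D' = D ∪ {(x₀, y₀)}` whose added
point is discordant with every point of `D` (so `d_{D'} = n`), and any such pair satisfies
`τ̂(D) - τ̂(D') = 3/2`. -/
theorem kendall_sensitivity_tight (n : ℕ) (hn : 2 ≤ n) :
    (∃ (X Y : Fin n → ℝ) (x₀ y₀ : ℝ),
      Function.Injective X ∧ Function.Injective Y ∧
      Function.Injective (Fin.snoc X x₀ : Fin (n + 1) → ℝ) ∧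
      Function.Injective (Fin.snoc Y y₀ : Fin (n + 1) → ℝ) ∧
      discord X Y = 0 ∧
      (∀ j : Fin n, (X j - x₀) * (Y j - y₀) < 0) ∧
      discord (Fin.snoc X x₀ : Fin (n + 1) → ℝ) (Fin.snoc Y y₀) = n) ∧
    (∀ (X Y : Fin n → ℝ) (x₀ y₀ : ℝ),
      Function.Injective X → Function.Injective Y →
      Function.Injective (Fin.snoc X x₀ : Fin (n + 1) → ℝ) →
      Function.Injective (Fin.snoc Y y₀ : Fin (n + 1) → ℝ) →
      discord X Y = 0 →
      (∀ j : Fin n, (X j - x₀) * (Y j - y₀) < 0) →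
      discord (Fin.snoc X x₀ : Fin (n + 1) → ℝ) (Fin.snoc Y y₀) = n →
      tauHat X Y - tauHat (Fin.snoc X x₀ : Fin (n + 1) → ℝ) (Fin.snoc Y y₀) = 3 / 2) := by
  have hdisc : ∀ j : Fin n, ((j : ℝ) - (n : ℝ)) * ((j : ℝ) - (-1 : ℝ)) < 0 := by
    intro j
    have h1 : (j : ℝ) - n < 0 := by
      have : (j : ℝ) < n := by exact_mod_cast j.isLt
      linarith
    have h2 : (0 : ℝ) ≤ (j : ℝ) := by positivity
    exact mul_neg_of_neg_of_pos h1 (by linarith)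
  constructor
  · -- existence
    refine ⟨fun j => (j : ℝ), fun j => (j : ℝ), (n : ℝ), -1, ?_, ?_, ?_, ?_, discord_diag n,
      hdisc, discord_snoc_eq _ _ _ _ (discord_diag n) hdisc⟩
    · intro a b h
      simp only at h
      exact Fin.ext (by exact_mod_cast h)
    · intro a b h
      simp only at h
      exact Fin.ext (by exact_mod_cast h)
    · have hX : (Fin.snoc (fun j : Fin n => (j : ℝ)) (n : ℝ) : Fin (n + 1) → ℝ)
          = fun i : Fin (n + 1) => (i : ℝ) := by
        funext i
        refine Fin.lastCases ?_ ?_ i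
        · simp [Fin.snoc_last]
        · intro j; simp [Fin.snoc_castSucc]
      rw [hX]
      intro a b h
      simp only at h
      exact Fin.ext (by exact_mod_cast h)
    · intro a b
      refine Fin.lastCases ?_ ?_ a
      · refine Fin.lastCases ?_ ?_ b
        · intro _; rfl
        · intro jb h
          simp only [Fin.snoc_last, Fin.snoc_castSucc] at h
          exfalso
          have : (0 : ℝ) ≤ (jb : ℝ) := by positivity
          linarith [h.symm]
      · intro ja
        refine Fin.lastCases ?_ ?_ b
        · intro h
          simp only [Fin.snoc_last, Fin.snoc_castSucc] at h
          exfalso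
          have : (0 : ℝ) ≤ (ja : ℝ) := by positivity
          linarith
        · intro jb h
          simp only [Fin.snoc_castSucc] at h
          have : ja = jb := Fin.ext (by exact_mod_cast h)
          rw [this]
  · -- the gap
    intro X Y x₀ y₀ _ _ _ _ hd0 _ hdn
    unfold tauHat
    rw [hd0, hdn]
    have hn0 : (n : ℝ) ≠ 0 := by
      have : (0 : ℕ) < n := by omega
      exact_mod_cast this.ne'
    have hcast : ((n + 1 : ℕ) : ℝ) = (n : ℝ) + 1 := by push_cast; ring
    rw [hcast]
    field_simp
    ring_nf
    rw [mul_inv_cancel₀ hn0]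
    norm_num
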